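/- Let b_N = ⌊√N⌋ (so b_N/√N → 1) and let Q(N) be the number of triples (the count of admissible labelings of the triangle graph): Q(N) = #{η : {u,v,w} → [N] : |η(u)−η(v)|_N ≤ b_N, |η(v)−η(w)|_N ≤ b_N, |η(u)−η(w)|_N ≤ b_N}. Then lim_{N→∞} Q(N)/(2b_N+1)⁴ = 3/16. Equivalently, Q(N) = N·(2b_N + 1 + 2·Σ_{j=b_N+1}^{2b_N} j) for N large enough. -/

import Mathlib

open Filter
open scoped Topology

/-- The periodic distance `|j - k|_N = min(|j - k|, N - |j - k|)` on `[N]`. -/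
def pdist (N : ℕ) (j k : Fin N) : ℕ :=
  min ((j.val : ℤ) - (k.val : ℤ)).natAbs (N - ((j.val : ℤ) - (k.val : ℤ)).natAbs)

/-- The number of labelings `η` of the triangle graph `K₃` by `[N]` in which all
three pairwise periodic distances are at most `b`. -/
noncomputable def triangleCount (N b : ℕ) : ℕ :=
  Nat.card {η : Fin 3 → Fin N //
    pdist N (η 0) (η 1) ≤ b ∧ pdist N (η 1) (η 2) ≤ b ∧ pdist N (η 0) (η 2) ≤ b}

namespace TriangleAux

def fdiff (N : ℕ) (x y : Fin N) : ℤ :=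
  if 2 * ((y.val : ℤ) - x.val) ≥ (N : ℤ) then (y.val : ℤ) - x.val - N
  else if 2 * ((y.val : ℤ) - x.val) < -(N : ℤ) then (y.val : ℤ) - x.val + N
  else (y.val : ℤ) - x.val

lemma fdiff_spec (N : ℕ) (x y : Fin N) :
    (fdiff N x y = (y.val : ℤ) - x.val ∨ fdiff N x y = (y.val : ℤ) - x.val - N ∨
      fdiff N x y = (y.val : ℤ) - x.val + N) ∧
    -(N : ℤ) ≤ 2 * fdiff N x y ∧ 2 * fdiff N x y < N := by
  have hx := x.isLt
  have hy := y.isLt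
  unfold fdiff
  split_ifs <;> omega

lemma pdist_eq (N : ℕ) (x y : Fin N) : pdist N x y = (fdiff N x y).natAbs := by
  have hx := x.isLt
  have hy := y.isLt
  unfold pdist fdiff
  split_ifs <;> omega

def addVal (N : ℕ) (x : ℕ) (a : ℤ) : ℕ :=
  min ((if (x : ℤ) + a < 0 then (x : ℤ) + a + N
        else if (x : ℤ) + a < (N : ℤ) then (x : ℤ) + a
        else (x : ℤ) + a - N).toNat) (N - 1)

def addInt (N : ℕ) (x : Fin N) (a : ℤ) : Fin N :=
  ⟨addVal N x.val a, by have := x.isLt; unfold addVal; split_ifs <;> omega⟩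

lemma addInt_val (N : ℕ) (x : Fin N) (a : ℤ) (ha : a.natAbs ≤ N) :
    ((addInt N x a).val : ℤ) = (x.val : ℤ) + a ∨
    ((addInt N x a).val : ℤ) = (x.val : ℤ) + a - N ∨
    ((addInt N x a).val : ℤ) = (x.val : ℤ) + a + N := by
  have hx := x.isLt
  unfold addInt
  dsimp only
  unfold addVal
  split_ifs <;> omega

noncomputable def pairSet (b : ℕ) : Finset (ℤ × ℤ) :=
  (Finset.Icc (-(b:ℤ)) b ×ˢ Finset.Icc (-(b:ℤ)) b).filter fun p => (p.1 - p.2).natAbs ≤ b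

lemma fiber_eq (b : ℕ) (a : ℤ) (ha : -(b:ℤ) ≤ a ∧ a ≤ b) :
    (pairSet b).filter (fun p => p.1 = a) =
      (Finset.Icc (max (-(b:ℤ)) (a-b)) (min (b:ℤ) (a+b))).map
        ⟨fun c => (a, c), fun _ _ h => congrArg Prod.snd h⟩ := by
  ext ⟨u, v⟩
  simp only [pairSet, Finset.mem_filter, Finset.mem_product, Finset.mem_Icc, Finset.mem_map,
    Function.Embedding.coeFn_mk, Prod.mk.injEq]
  constructor
  · rintro ⟨⟨⟨h1, h2⟩, h3⟩, rfl⟩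
    exact ⟨v, by omega, rfl⟩
  · rintro ⟨c, hc, rfl, rfl⟩
    refine ⟨⟨⟨?_, ?_⟩, ?_⟩, rfl⟩ <;> omega

lemma sumAbs (b : ℕ) :
    ∑ a ∈ Finset.Icc (-(b:ℤ)) b, (2*b + 1 - a.natAbs) = 3*b*b + 3*b + 1 := by
  induction b with
  | zero => simp
  | succ n ih =>
    have hins : Finset.Icc (-((n:ℤ)+1)) ((n:ℤ)+1) =
        insert (-((n:ℤ)+1)) (insert (((n:ℤ)+1)) (Finset.Icc (-(n:ℤ)) n)) := by
      ext z; simp only [Finset.mem_Icc, Finset.mem_insert]; omega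
    have h1 : ((n:ℤ)+1) ∉ Finset.Icc (-(n:ℤ)) (n:ℤ) := by
      simp only [Finset.mem_Icc]; omega
    have h2 : (-((n:ℤ)+1)) ∉ insert (((n:ℤ)+1)) (Finset.Icc (-(n:ℤ)) (n:ℤ)) := by
      simp only [Finset.mem_insert, Finset.mem_Icc]; omega
    push_cast
    rw [hins, Finset.sum_insert h2, Finset.sum_insert h1]
    have hcong : ∑ a ∈ Finset.Icc (-(n:ℤ)) n, (2*(n+1) + 1 - a.natAbs)
        = ∑ a ∈ Finset.Icc (-(n:ℤ)) n, ((2*n + 1 - a.natAbs) + 2) := by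
      apply Finset.sum_congr rfl
      intro a ha
      simp only [Finset.mem_Icc] at ha
      omega
    rw [hcong, Finset.sum_add_distrib, ih, Finset.sum_const, Int.card_Icc]
    have hc : ((n:ℤ) + 1 - -(n:ℤ)).toNat = 2*n+1 := by omega
    have hn1 : ((-((n:ℤ)+1))).natAbs = n+1 := by omega
    have hn2 : (((n:ℤ)+1)).natAbs = n+1 := by omega
    rw [hc, hn1, hn2]
    have e1 : 2*(n+1)+1 - (n+1) = n+2 := by omega
    rw [e1, smul_eq_mul]
    ring
lemma pairSet_card (b : ℕ) : (pairSet b).card = 3*b*b + 3*b + 1 := by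
  rw [Finset.card_eq_sum_card_fiberwise (f := Prod.fst) (t := Finset.Icc (-(b:ℤ)) b)
    (fun p hp => by
      simp only [pairSet, Finset.mem_filter, Finset.mem_product] at hp
      exact (Finset.mem_product.1 (Finset.mem_filter.1 hp).1).1)]
  have : ∀ a ∈ Finset.Icc (-(b:ℤ)) b,
      ((pairSet b).filter (fun p => p.1 = a)).card = 2*b + 1 - a.natAbs := by
    intro a ha
    simp only [Finset.mem_Icc] at ha
    rw [fiber_eq b a ha, Finset.card_map, Int.card_Icc]
    omega
  rw [Finset.sum_congr rfl this, sumAbs]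

lemma count_eq (N b : ℕ) (hN : 4*b < N) :
    triangleCount N b = N * (3*b*b + 3*b + 1) := by
  classical
  rw [triangleCount, Nat.card_eq_fintype_card, Fintype.card_subtype]
  have key : (Finset.univ.filter fun η : Fin 3 → Fin N =>
      pdist N (η 0) (η 1) ≤ b ∧ pdist N (η 1) (η 2) ≤ b ∧ pdist N (η 0) (η 2) ≤ b).card
      = ((Finset.univ : Finset (Fin N)) ×ˢ pairSet b).card := by
    apply Finset.card_bij'
      (i := fun η _ => (η 0, (fdiff N (η 0) (η 1), fdiff N (η 0) (η 2))))
      (j := fun p _ => ![p.1, addInt N p.1 p.2.1, addInt N p.1 p.2.2])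
    · -- hi
      intro η hη
      simp only [Finset.mem_filter, Finset.mem_univ, true_and] at hη
      rw [pdist_eq, pdist_eq, pdist_eq] at hη
      have s01 := fdiff_spec N (η 0) (η 1)
      have s02 := fdiff_spec N (η 0) (η 2)
      have s12 := fdiff_spec N (η 1) (η 2)
      simp only [Finset.mem_product, Finset.mem_univ, true_and, pairSet, Finset.mem_filter,
        Finset.mem_Icc]
      omega
    · -- hj
      intro p hp
      obtain ⟨x, a, c⟩ := p
      simp only [Finset.mem_product, Finset.mem_univ, true_and, pairSet, Finset.mem_filter,
        Finset.mem_Icc] at hp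
      obtain ⟨⟨⟨ha1, ha2⟩, hc1, hc2⟩, hac⟩ := hp
      simp only [Finset.mem_filter, Finset.mem_univ, true_and, Matrix.cons_val_zero,
        Matrix.cons_val_one, Matrix.head_cons, Matrix.cons_val_two, Matrix.tail_cons]
      rw [pdist_eq, pdist_eq, pdist_eq]
      have hva := addInt_val N x a (by omega)
      have hvc := addInt_val N x c (by omega)
      have s1 := fdiff_spec N x (addInt N x a)
      have s2 := fdiff_spec N (addInt N x a) (addInt N x c)
      have s3 := fdiff_spec N x (addInt N x c)
      have hx := x.isLt
      omega
    · -- left inverse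
      intro η hη
      funext i
      fin_cases i
      · rfl
      · apply Fin.ext
        show (addInt N (η 0) (fdiff N (η 0) (η 1))).val = (η 1).val
        have s01 := fdiff_spec N (η 0) (η 1)
        have hv := addInt_val N (η 0) (fdiff N (η 0) (η 1))
          (by have := (η 0).isLt; have := (η 1).isLt; omega)
        have := (addInt N (η 0) (fdiff N (η 0) (η 1))).isLt
        have := (η 1).isLt
        have := (η 0).isLt
        omega
      · apply Fin.ext
        show (addInt N (η 0) (fdiff N (η 0) (η 2))).val = (η 2).val
        have s02 := fdiff_spec N (η 0) (η 2)
        have hv := addInt_val N (η 0) (fdiff N (η 0) (η 2))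
          (by have := (η 0).isLt; have := (η 2).isLt; omega)
        have := (addInt N (η 0) (fdiff N (η 0) (η 2))).isLt
        have := (η 2).isLt
        have := (η 0).isLt
        omega
    · -- right inverse
      intro p hp
      obtain ⟨x, a, c⟩ := p
      simp only [Finset.mem_product, Finset.mem_univ, true_and, pairSet, Finset.mem_filter,
        Finset.mem_Icc] at hp
      obtain ⟨⟨⟨ha1, ha2⟩, hc1, hc2⟩, hac⟩ := hp
      simp only [Matrix.cons_val_zero, Matrix.cons_val_one, Matrix.head_cons,
        Matrix.cons_val_two, Matrix.tail_cons, Prod.mk.injEq]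
      refine ⟨trivial, ?_, ?_⟩
      · have hva := addInt_val N x a (by omega)
        have s1 := fdiff_spec N x (addInt N x a)
        have hx := x.isLt
        omega
      · have hvc := addInt_val N x c (by omega)
        have s3 := fdiff_spec N x (addInt N x c)
        have hx := x.isLt
        omega
  rw [key, Finset.card_product, Finset.card_univ, Fintype.card_fin, pairSet_card]


lemma inner_eq (b : ℕ) :
    2*b + 1 + 2 * ∑ j ∈ Finset.Icc (b+1) (2*b), j = 3*b*b + 3*b + 1 := by
  have hIcc : Finset.Icc (b+1) (2*b) = Finset.Ico (b+1) (2*b+1) := by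
    ext j; simp only [Finset.mem_Icc, Finset.mem_Ico]; omega
  have hsplit : (∑ j ∈ Finset.Ico 0 (b+1), j) + ∑ j ∈ Finset.Ico (b+1) (2*b+1), j
      = ∑ j ∈ Finset.Ico 0 (2*b+1), j :=
    Finset.sum_Ico_consecutive _ (by omega) (by omega)
  rw [hIcc]
  have h1 : (∑ j ∈ Finset.Ico 0 (b+1), j) * 2 = (b+1) * b := by
    rw [← Finset.range_eq_Ico, Finset.sum_range_id_mul_two]; simp
  have h2 : (∑ j ∈ Finset.Ico 0 (2*b+1), j) * 2 = (2*b+1) * (2*b) := by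
    rw [← Finset.range_eq_Ico, Finset.sum_range_id_mul_two]; simp
  nlinarith [hsplit, h1, h2]

lemma sqrt_tendsto : Tendsto (fun N : ℕ => Nat.sqrt N) atTop atTop :=
  tendsto_atTop_atTop.2 fun b => ⟨b*b, fun _ hN => Nat.le_sqrt.2 hN⟩

lemma hlo : Tendsto (fun b : ℕ => ((b:ℝ)*b * (3*(b:ℝ)*b + 3*b + 1)) / (2*b+1)^4)
    atTop (𝓝 (3/16)) := by
  have key : Tendsto (fun b : ℕ => (1:ℝ)/b) atTop (𝓝 0) :=
    tendsto_one_div_atTop_nhds_zero_nat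
  have hnum : Tendsto (fun b : ℕ => 3 + 3*(1/(b:ℝ)) + (1/(b:ℝ))^2)
      atTop (𝓝 (3 + 3*0 + 0^2)) :=
    (tendsto_const_nhds.add (key.const_mul 3)).add (key.pow 2)
  have hden : Tendsto (fun b : ℕ => (2 + 1/(b:ℝ))^4) atTop (𝓝 ((2+(0:ℝ))^4)) :=
    (tendsto_const_nhds.add key).pow 4
  have h := hnum.div hden (by norm_num)
  have heq : (3 + 3*(0:ℝ) + 0^2) / ((2+(0:ℝ))^4) = 3/16 := by norm_num
  rw [heq] at h
  apply h.congr'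
  filter_upwards [eventually_ge_atTop 1] with b hb
  have hb0 : (b:ℝ) ≠ 0 := Nat.cast_ne_zero.2 (by omega)
  have h2 : (2*(b:ℝ)+1) ≠ 0 := by positivity
  rw [Pi.div_apply]
  field_simp

lemma hhi : Tendsto (fun b : ℕ => (((b:ℝ)*b + 2*b) * (3*(b:ℝ)*b + 3*b + 1)) / (2*b+1)^4)
    atTop (𝓝 (3/16)) := by
  have key : Tendsto (fun b : ℕ => (1:ℝ)/b) atTop (𝓝 0) :=
    tendsto_one_div_atTop_nhds_zero_nat
  have hnum : Tendsto (fun b : ℕ => (1 + 2*(1/(b:ℝ))) * (3 + 3*(1/(b:ℝ)) + (1/(b:ℝ))^2))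
      atTop (𝓝 ((1 + 2*0) * (3 + 3*0 + 0^2))) :=
    (tendsto_const_nhds.add (key.const_mul 2)).mul
      ((tendsto_const_nhds.add (key.const_mul 3)).add (key.pow 2))
  have hden : Tendsto (fun b : ℕ => (2 + 1/(b:ℝ))^4) atTop (𝓝 ((2+(0:ℝ))^4)) :=
    (tendsto_const_nhds.add key).pow 4
  have h := hnum.div hden (by norm_num)
  have heq : ((1 + 2*(0:ℝ)) * (3 + 3*0 + 0^2)) / ((2+(0:ℝ))^4) = 3/16 := by norm_num
  rw [heq] at h
  apply h.congr'
  filter_upwards [eventually_ge_atTop 1] with b hb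
  have hb0 : (b:ℝ) ≠ 0 := Nat.cast_ne_zero.2 (by omega)
  have h2 : (2*(b:ℝ)+1) ≠ 0 := by positivity
  rw [Pi.div_apply]
  field_simp

lemma sqrt_bound (N : ℕ) (hN : 17 ≤ N) : 4 * Nat.sqrt N < N := by
  have h1 : Nat.sqrt N * Nat.sqrt N ≤ N := Nat.sqrt_le N
  have h2 : 4 ≤ Nat.sqrt N := Nat.le_sqrt.2 (by omega)
  rcases Nat.lt_or_ge (Nat.sqrt N) 5 with h | h
  · omega
  · have : 4 * Nat.sqrt N < Nat.sqrt N * Nat.sqrt N := by nlinarith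
    omega

end TriangleAux

open TriangleAux in
/-- For `b_N = ⌊√N⌋`: the count `Q(N)` of admissible triangle labelings satisfies
`Q(N)/(2b_N+1)⁴ → 3/16`, and `Q(N) = N·(2b_N + 1 + 2·Σ_{j=b_N+1}^{2b_N} j)` for `N`
large enough. -/
theorem triangleCount_asymptotics :
    Tendsto
        (fun N => (triangleCount N (Nat.sqrt N) : ℝ) / (2 * (Nat.sqrt N : ℝ) + 1) ^ 4)
        atTop (𝓝 (3 / 16)) ∧
      ∃ N₀ : ℕ, ∀ N ≥ N₀,
        triangleCount N (Nat.sqrt N) =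
          N * (2 * Nat.sqrt N + 1 +
            2 * ∑ j ∈ Finset.Icc (Nat.sqrt N + 1) (2 * Nat.sqrt N), j) := by
  constructor
  · apply tendsto_of_tendsto_of_tendsto_of_le_of_le' (hlo.comp sqrt_tendsto)
      (hhi.comp sqrt_tendsto)
    · filter_upwards [eventually_ge_atTop 17] with N hN
      have hb4 := sqrt_bound N hN
      have hle : Nat.sqrt N * Nat.sqrt N ≤ N := Nat.sqrt_le N
      simp only [Function.comp_apply]
      rw [count_eq N _ hb4]
      push_cast
      gcongr
      exact_mod_cast hle
    · filter_upwards [eventually_ge_atTop 17] with N hN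
      have hb4 := sqrt_bound N hN
      have hge : N ≤ Nat.sqrt N * Nat.sqrt N + 2 * Nat.sqrt N := by
        have h := Nat.lt_succ_sqrt' N
        rw [Nat.succ_eq_add_one] at h
        have h2 : (Nat.sqrt N + 1) ^ 2 = Nat.sqrt N * Nat.sqrt N + 2 * Nat.sqrt N + 1 := by
          ring
        omega
      simp only [Function.comp_apply]
      rw [count_eq N _ hb4]
      push_cast
      gcongr
      exact_mod_cast hge
  · exact ⟨17, fun N hN => by rw [count_eq N _ (sqrt_bound N hN), inner_eq]⟩
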